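/- Let G be a finite simple graph on a nonempty vertex set V, α : V → V → ℝ antisymmetric, E₀ a set of edges of G, and G' = G − E₀ the graph with the edges in E₀ deleted. Then for every 1 ≤ k ≤ |V|, the k-th magnetic Cheeger constant with combinatorial weights satisfies h_k(G', α) ≤ h_k(G, α). -/

import Mathlib

open scoped Classical

/-- The frustration index of the subgraph of `(G, α)` induced on `V₀` (with
combinatorial weights): the infimum over `τ : V → ℝ` of
`Σ_{{v,u} ∈ E(G[V₀])} |exp(i·τ(u)) − exp(−i·α v u)·exp(i·τ(v))|`, each
unordered edge counted once (hence the factor `1/2` over ordered pairs). -/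
noncomputable def frustration {V : Type} [Fintype V]
    (G : SimpleGraph V) (α : V → V → ℝ) (V₀ : Finset V) : ℝ :=
  ⨅ τ : V → ℝ, (1 / 2) * ∑ v ∈ V₀, ∑ u ∈ V₀,
    if G.Adj v u then
      ‖(Complex.exp (Complex.I * (τ u : ℝ))
        - Complex.exp (-(Complex.I * (α v u : ℝ))) * Complex.exp (Complex.I * (τ v : ℝ)))‖
    else 0

/-- The magnetic isoperimetric ratio
`h(G, α, V₀) = (ι(G[V₀], α) + |E(V₀, V∖V₀)|) / |V₀|` with combinatorial
weights; edges from `V₀` to its complement are counted by the ordered pairs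
`(v, u)` with `v ∈ V₀`, `u ∉ V₀`, `v ∼ u` (each such edge appearing once). -/
noncomputable def cheegerRatio {V : Type} [Fintype V]
    (G : SimpleGraph V) (α : V → V → ℝ) (V₀ : Finset V) : ℝ :=
  (frustration G α V₀ +
      ((Finset.univ.filter
        (fun p : V × V => G.Adj p.1 p.2 ∧ p.1 ∈ V₀ ∧ p.2 ∉ V₀)).card : ℝ))
    / (V₀.card : ℝ)

/-- The `k`-th magnetic Cheeger constant with combinatorial weights:
`h_k(G, α) = min` over families of `k` pairwise disjoint nonempty vertex sets
of the maximum of the isoperimetric ratios. -/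
noncomputable def cheeger {V : Type} [Fintype V]
    (G : SimpleGraph V) (α : V → V → ℝ) (k : ℕ) : ℝ :=
  sInf { x : ℝ | ∃ P : Fin k → Finset V,
    (∀ i, (P i).Nonempty) ∧ (∀ i j, i ≠ j → Disjoint (P i) (P j)) ∧
    x = ⨆ i, cheegerRatio G α (P i) }


lemma frustration_nonneg {V : Type} [Fintype V]
    (G : SimpleGraph V) (α : V → V → ℝ) (V₀ : Finset V) :
    0 ≤ frustration G α V₀ := by
  apply Real.iInf_nonneg
  intro τ
  apply mul_nonneg (by norm_num)
  refine Finset.sum_nonneg fun v _ => Finset.sum_nonneg fun u _ => ?_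
  split
  · exact norm_nonneg _
  · exact le_rfl

lemma frustration_le {V : Type} [Fintype V]
    (G G' : SimpleGraph V) (h : ∀ v u, G'.Adj v u → G.Adj v u)
    (α : V → V → ℝ) (V₀ : Finset V) :
    frustration G' α V₀ ≤ frustration G α V₀ := by
  apply ciInf_mono
  · refine ⟨0, Set.forall_mem_range.2 fun τ => ?_⟩
    apply mul_nonneg (by norm_num)
    refine Finset.sum_nonneg fun v _ => Finset.sum_nonneg fun u _ => ?_
    split
    · exact norm_nonneg _
    · exact le_rfl
  · intro τ
    apply mul_le_mul_of_nonneg_left _ (by norm_num)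
    refine Finset.sum_le_sum fun v _ => Finset.sum_le_sum fun u _ => ?_
    by_cases hadj : G'.Adj v u
    · rw [if_pos hadj, if_pos (h v u hadj)]
    · rw [if_neg hadj]
      split
      · exact norm_nonneg _
      · exact le_rfl

lemma cheegerRatio_le {V : Type} [Fintype V]
    (G G' : SimpleGraph V) (h : ∀ v u, G'.Adj v u → G.Adj v u)
    (α : V → V → ℝ) (V₀ : Finset V) :
    cheegerRatio G' α V₀ ≤ cheegerRatio G α V₀ := by
  unfold cheegerRatio
  rcases Nat.eq_zero_or_pos V₀.card with h0 | h0
  · simp [h0]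
  gcongr ?_ / _
  refine add_le_add (frustration_le G G' h α V₀) ?_
  apply Nat.cast_le.mpr
  apply Finset.card_le_card
  intro p hp
  simp only [Finset.mem_filter] at *
  exact ⟨hp.1, h _ _ hp.2.1, hp.2.2⟩

lemma cheegerRatio_nonneg {V : Type} [Fintype V]
    (G : SimpleGraph V) (α : V → V → ℝ) (V₀ : Finset V) :
    0 ≤ cheegerRatio G α V₀ := by
  apply div_nonneg _ (Nat.cast_nonneg _)
  have := frustration_nonneg G α V₀
  positivity

/-- deleting edges decreases all magnetic Cheeger constants:
`h_k(G − E₀, α) ≤ h_k(G, α)` for all `1 ≤ k ≤ |V|`. -/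
theorem stmt19 {V : Type} [Fintype V] [DecidableEq V] [Nonempty V]
    (G : SimpleGraph V) (E₀ : Set (Sym2 V))
    (α : V → V → ℝ) (hα : ∀ v u, α v u = - α u v) :
    ∀ k : ℕ, 1 ≤ k → k ≤ Fintype.card V →
      cheeger (G.deleteEdges E₀) α k ≤ cheeger G α k := by
  intro k hk1 hk2
  set G' := G.deleteEdges E₀ with hG'
  have hsub : ∀ v u, G'.Adj v u → G.Adj v u := fun v u h => h.1
  -- the set for G is nonempty
  obtain ⟨f⟩ := Function.Embedding.nonempty_of_card_le (α := Fin k) (β := V)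
    (by simpa using hk2)
  have hBdd' : BddBelow { x : ℝ | ∃ P : Fin k → Finset V,
      (∀ i, (P i).Nonempty) ∧ (∀ i j, i ≠ j → Disjoint (P i) (P j)) ∧
      x = ⨆ i, cheegerRatio G' α (P i) } := by
    refine ⟨0, ?_⟩
    rintro x ⟨P, hP1, hP2, rfl⟩
    have : Nonempty (Fin k) := ⟨⟨0, hk1⟩⟩
    obtain ⟨i⟩ := this
    refine le_trans (cheegerRatio_nonneg G' α (P i)) ?_
    exact le_ciSup (f := fun i => cheegerRatio G' α (P i)) (Set.Finite.bddAbove (Set.finite_range _)) i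
  have hne : { x : ℝ | ∃ P : Fin k → Finset V,
      (∀ i, (P i).Nonempty) ∧ (∀ i j, i ≠ j → Disjoint (P i) (P j)) ∧
      x = ⨆ i, cheegerRatio G α (P i) }.Nonempty := by
    refine ⟨_, fun i => {f i}, fun i => Finset.singleton_nonempty _, ?_, rfl⟩
    intro i j hij
    rw [Finset.disjoint_singleton]
    exact f.injective.ne hij
  apply le_csInf hne
  rintro x ⟨P, hP1, hP2, rfl⟩
  refine csInf_le_of_le hBdd' ⟨P, hP1, hP2, rfl⟩ ?_
  have : Nonempty (Fin k) := ⟨⟨0, hk1⟩⟩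
  exact ciSup_mono (Set.Finite.bddAbove (Set.finite_range _))
    (fun i => cheegerRatio_le G G' hsub α (P i))
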